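/- Corollary 2 (substructural generation of vorticity in Korteweg fluids): For a steady flow of a Korteweg fluid satisfying the steady momentum balance ρ (Dv)v = div T with T = −p̄ I − T^E, if the entropy η and the total enthalpy h are constant throughout B, then at every point of B: ω × v = −grad(ι² div(ρ ∂_gφ) + ∂_gφ·grad ι) + ι grad(v·grad Π − ∂_ιχ). -/

import Mathlib

noncomputable section

/-- Points of ℝ³. -/
abbrev V3 : Type := Fin 3 → ℝ

/-- Partial derivative ∂ᵢ of a scalar field on ℝ³. -/
def pd (i : Fin 3) (f : V3 → ℝ) (x : V3) : ℝ :=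
  fderiv ℝ f x (Pi.single i 1)

/-- Cross product on ℝ³. -/
def cross (a b : V3) : V3 :=
  ![a 1 * b 2 - a 2 * b 1,
    a 2 * b 0 - a 0 * b 2,
    a 0 * b 1 - a 1 * b 0]

/-- Curl of a vector field on ℝ³. -/
def curl (u : V3 → V3) (x : V3) : V3 :=
  ![pd 1 (fun y => u y 2) x - pd 2 (fun y => u y 1) x,
    pd 2 (fun y => u y 0) x - pd 0 (fun y => u y 2) x,
    pd 0 (fun y => u y 1) x - pd 1 (fun y => u y 0) x]

/-- A steady Korteweg fluid on an open set `B ⊆ ℝ³`: smooth fields `ρ > 0`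
(mass density), `η` (entropy), `v` (velocity), a smooth potential
`φ = φ(ι, g, η)` and a smooth kinetic co-energy `χ = χ(ι, ι̇)`. -/
structure KortewegFluid where
  B : Set V3
  hB : IsOpen B
  ρ : V3 → ℝ
  η : V3 → ℝ
  v : V3 → V3
  φ : ℝ × V3 × ℝ → ℝ
  χ : ℝ × ℝ → ℝ
  hρ : ContDiffOn ℝ (⊤ : ℕ∞) ρ B
  hη : ContDiffOn ℝ (⊤ : ℕ∞) η B
  hv : ContDiffOn ℝ (⊤ : ℕ∞) v B
  hφ : ContDiff ℝ (⊤ : ℕ∞) φ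
  hχ : ContDiff ℝ (⊤ : ℕ∞) χ
  hρpos : ∀ x ∈ B, 0 < ρ x

namespace KortewegFluid

variable (K : KortewegFluid)

/-- Specific volume `ι = 1/ρ`. -/
def ι (x : V3) : ℝ := (K.ρ x)⁻¹

/-- The point `(ι(x), grad ι(x), η(x))` at which `φ` and its partial
derivatives are evaluated. -/
def pt (x : V3) : ℝ × V3 × ℝ := (K.ι x, fun i => pd i K.ι x, K.η x)

/-- `∂_ιφ` evaluated along the fields. -/
def dφι (x : V3) : ℝ := fderiv ℝ K.φ (K.pt x) (1, 0, 0)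

/-- `∂_gφ` (vector of partial derivatives of `φ` w.r.t. the gradient slot)
evaluated along the fields. -/
def dφg (x : V3) : V3 := fun j => fderiv ℝ K.φ (K.pt x) (0, Pi.single j 1, 0)

/-- Temperature `ϑ = ∂_ηφ` evaluated along the fields. -/
def temp (x : V3) : ℝ := fderiv ℝ K.φ (K.pt x) (0, 0, 1)

/-- Convective rate `ι̇ = v · grad ι`. -/
def ιdot (x : V3) : ℝ := ∑ j, K.v x j * pd j K.ι x

/-- `∂_ιχ` evaluated along the fields. -/
def dχι (x : V3) : ℝ := fderiv ℝ K.χ (K.ι x, K.ιdot x) (1, 0)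

/-- The field `Π : x ↦ ∂_ι̇χ(ι(x), ι̇(x))`. -/
def Pi' (x : V3) : ℝ := fderiv ℝ K.χ (K.ι x, K.ιdot x) (0, 1)

/-- `div(ρ ∂_gφ)`. -/
def divρg (x : V3) : ℝ := ∑ j, pd j (fun y => K.ρ y * K.dφg y j) x

/-- Kinetic pressure `p̌ = ρι (v·grad Π) − ∂_ιχ`. -/
def pcheck (x : V3) : ℝ :=
  K.ρ x * K.ι x * (∑ j, K.v x j * pd j K.Pi' x) - K.dχι x

/-- Pressure `p̄ = −ρι ∂_ιφ + ι div(ρ ∂_gφ) − p̌`. -/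
def pbar (x : V3) : ℝ :=
  -(K.ρ x * K.ι x * K.dφι x) + K.ι x * K.divρg x - K.pcheck x

/-- Specific enthalpy `ξ = φ − ι ∂_ιφ − ∂_gφ · grad ι`. -/
def ξ (x : V3) : ℝ :=
  K.φ (K.pt x) - K.ι x * K.dφι x - ∑ j, K.dφg x j * pd j K.ι x

/-- Total enthalpy `h = (1/2)|v|² + ξ`. -/
def htot (x : V3) : ℝ := (1 / 2) * (∑ k, (K.v x k) ^ 2) + K.ξ x

/-- Korteweg stress `T^E = grad ι ⊗ ρ ∂_gφ`. -/
def TE (x : V3) (i j : Fin 3) : ℝ := pd i K.ι x * (K.ρ x * K.dφg x j)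

/-- Steady momentum balance `ρ (Dv)v = div T` with `T = −p̄ I − T^E`
(stated componentwise). -/
def MomentumBalance : Prop :=
  ∀ x ∈ K.B, ∀ i : Fin 3,
    K.ρ x * ∑ j, pd j (fun y => K.v y i) x * K.v x j
      = ∑ j, pd j (fun y => -(K.pbar y) * (if i = j then (1:ℝ) else 0) - K.TE y i j) x

end KortewegFluid

open Filter Topology

section pdlemmas
variable {f g : V3 → ℝ} {x : V3} {i : Fin 3}

lemma pd_congr (h : f =ᶠ[nhds x] g) : pd i f x = pd i g x := by
  unfold pd; rw [h.fderiv_eq]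

lemma pd_add (hf : DifferentiableAt ℝ f x) (hg : DifferentiableAt ℝ g x) :
    pd i (fun y => f y + g y) x = pd i f x + pd i g x := by
  unfold pd; rw [fderiv_fun_add hf hg]; simp

lemma pd_neg : pd i (fun y => -f y) x = -pd i f x := by
  unfold pd; rw [fderiv_fun_neg]; simp

lemma pd_sub (hf : DifferentiableAt ℝ f x) (hg : DifferentiableAt ℝ g x) :
    pd i (fun y => f y - g y) x = pd i f x - pd i g x := by
  unfold pd; rw [fderiv_fun_sub hf hg]; simp

lemma pd_mul (hf : DifferentiableAt ℝ f x) (hg : DifferentiableAt ℝ g x) :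
    pd i (fun y => f y * g y) x = f x * pd i g x + g x * pd i f x := by
  unfold pd; rw [fderiv_fun_mul hf hg]; simp

lemma pd_const (c : ℝ) : pd i (fun _ => c) x = 0 := by
  unfold pd; simp

lemma pd_const_mul (hf : DifferentiableAt ℝ f x) (c : ℝ) :
    pd i (fun y => c * f y) x = c * pd i f x := by
  unfold pd; rw [fderiv_const_mul hf]; simp

lemma pd_sum {α : Type*} (s : Finset α) {F : α → V3 → ℝ}
    (hF : ∀ j ∈ s, DifferentiableAt ℝ (F j) x) :
    pd i (fun y => ∑ j ∈ s, F j y) x = ∑ j ∈ s, pd i (F j) x := by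
  unfold pd; rw [fderiv_fun_sum hF]; simp

/-- Chain rule for a smooth function of `(ℝ, V3, ℝ)` along three fields. -/
lemma pd_comp3 {φ : ℝ × V3 × ℝ → ℝ} (hφ : Differentiable ℝ φ) {a c : V3 → ℝ} {b : V3 → V3}
    (ha : DifferentiableAt ℝ a x) (hb : ∀ j, DifferentiableAt ℝ (fun y => b y j) x)
    (hc : DifferentiableAt ℝ c x) :
    pd i (fun y => φ (a y, b y, c y)) x
      = fderiv ℝ φ (a x, b x, c x) (1, 0, 0) * pd i a x
        + (∑ j, fderiv ℝ φ (a x, b x, c x) (0, Pi.single j 1, 0) * pd i (fun y => b y j) x)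
        + fderiv ℝ φ (a x, b x, c x) (0, 0, 1) * pd i c x := by
  have hb' : DifferentiableAt ℝ b x := differentiableAt_pi.mpr hb
  have hG : DifferentiableAt ℝ (fun y => (a y, b y, c y)) x := ha.prodMk (hb'.prodMk hc)
  have hcomp : pd i (fun y => φ (a y, b y, c y)) x
      = fderiv ℝ φ (a x, b x, c x) (fderiv ℝ (fun y => (a y, b y, c y)) x (Pi.single i 1)) := by
    unfold pd
    rw [show (fun y => φ (a y, b y, c y)) = φ ∘ (fun y => (a y, b y, c y)) from rfl,
      fderiv_comp x (hφ _) hG]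
    rfl
  rw [hcomp]
  have hfd : fderiv ℝ (fun y => (a y, b y, c y)) x (Pi.single i 1)
      = (pd i a x, fun j => pd i (fun y => b y j) x, pd i c x) := by
    rw [ha.fderiv_prodMk (hb'.prodMk hc), hb'.fderiv_prodMk hc]
    refine Prod.ext rfl (Prod.ext ?_ rfl)
    show fderiv ℝ b x (Pi.single i 1) = _
    rw [show b = (fun y j => b y j) from rfl, fderiv_pi hb]
    rfl
  rw [hfd]
  set F := fderiv ℝ φ (a x, b x, c x)
  set p := pd i a x; set w := fun j => pd i (fun y => b y j) x; set q := pd i c x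
  have key : ((p, w, q) : ℝ × V3 × ℝ)
      = p • ((1:ℝ), (0:V3), (0:ℝ)) + (∑ j, w j • (((0:ℝ), (Pi.single j 1 : V3), (0:ℝ)) : ℝ × V3 × ℝ))
        + q • ((0:ℝ), (0:V3), (1:ℝ)) := by
    have h1 : ∀ j : Fin 3, (w j • (((0:ℝ), (Pi.single j 1 : V3), (0:ℝ)) : ℝ × V3 × ℝ))
        = (((0:ℝ), (Pi.single j (w j) : V3), (0:ℝ)) : ℝ × V3 × ℝ) := by
      intro j
      refine Prod.ext (by simp) (Prod.ext ?_ (by simp))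
      funext k
      by_cases hk : k = j <;> simp [hk, Pi.single_apply]
    have hsum : (∑ j, (((0:ℝ), (Pi.single j (w j) : V3), (0:ℝ)) : ℝ × V3 × ℝ))
        = (((0:ℝ), w, (0:ℝ)) : ℝ × V3 × ℝ) := by
      rw [← prod_mk_sum, ← prod_mk_sum, Finset.univ_sum_single]
      simp
    simp only [h1, hsum]
    refine Prod.ext ?_ (Prod.ext ?_ ?_) <;> simp
  rw [key, map_add, map_add, map_smul, map_smul, map_sum]
  simp only [smul_eq_mul]
  congr 1
  · congr 1
    · ring
    · exact Finset.sum_congr rfl fun j _ => by rw [map_smul]; simp [mul_comm, w]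
  · ring

/-- Schwarz symmetry of second partials for smooth functions on an open set. -/
lemma pd_comm {s : Set V3} (hs : IsOpen s) (hx : x ∈ s)
    (hf : ContDiffOn ℝ (⊤:ℕ∞) f s) (i j : Fin 3) :
    pd i (pd j f) x = pd j (pd i f) x := by
  have hct : ContDiffAt ℝ (⊤:ℕ∞) f x := hf.contDiffAt (hs.mem_nhds hx)
  have hsymm := hct.isSymmSndFDerivAt (by rw [minSmoothness_of_isRCLikeNormedField]; exact (by decide : (2:WithTop ℕ∞) ≤ ((⊤:ℕ∞):WithTop ℕ∞)))
  have hd : DifferentiableAt ℝ (fderiv ℝ f) x :=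
    ((hf.fderiv_of_isOpen (m := ((⊤:ℕ∞):WithTop ℕ∞)) hs (by decide)).contDiffAt (hs.mem_nhds hx)).differentiableAt
      (by decide)
  have key : ∀ u v : V3, pd i (fun y => fderiv ℝ f y u) x = fderiv ℝ (fderiv ℝ f) x (Pi.single i 1) u := by
    intro u v
    unfold pd
    rw [fderiv_clm_apply hd (differentiableAt_const u)]
    simp
  have e1 : pd i (pd j f) x = fderiv ℝ (fderiv ℝ f) x (Pi.single i 1) (Pi.single j 1) := by
    unfold pd
    rw [fderiv_clm_apply hd (differentiableAt_const _)]
    simp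
  have e2 : pd j (pd i f) x = fderiv ℝ (fderiv ℝ f) x (Pi.single j 1) (Pi.single i 1) := by
    unfold pd
    rw [fderiv_clm_apply hd (differentiableAt_const _)]
    simp
  rw [e1, e2, hsymm]

end pdlemmas

namespace KortewegFluid

variable (K : KortewegFluid)

lemma hι' : ContDiffOn ℝ (⊤:ℕ∞) K.ι K.B :=
  K.hρ.inv fun x hx => (K.hρpos x hx).ne'

lemma pd_smoothOn {f : V3 → ℝ} (hf : ContDiffOn ℝ (⊤:ℕ∞) f K.B) (j : Fin 3) :
    ContDiffOn ℝ (⊤:ℕ∞) (pd j f) K.B :=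
  (hf.fderiv_of_isOpen (m := ((⊤:ℕ∞):WithTop ℕ∞)) K.hB (by decide)).clm_apply contDiffOn_const

lemma hv_comp (j : Fin 3) : ContDiffOn ℝ (⊤:ℕ∞) (fun y => K.v y j) K.B :=
  contDiffOn_pi.mp K.hv j

lemma hpt' : ContDiffOn ℝ (⊤:ℕ∞) K.pt K.B :=
  (K.hι').prodMk ((contDiffOn_pi.mpr fun j => K.pd_smoothOn K.hι' j).prodMk K.hη)

lemma hdφι' : ContDiffOn ℝ (⊤:ℕ∞) K.dφι K.B :=
  ((K.hφ.fderiv_right (m := ((⊤:ℕ∞):WithTop ℕ∞)) (by decide)).comp_contDiffOn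
    K.hpt').clm_apply contDiffOn_const

lemma hdφg' (j : Fin 3) : ContDiffOn ℝ (⊤:ℕ∞) (fun y => K.dφg y j) K.B :=
  ((K.hφ.fderiv_right (m := ((⊤:ℕ∞):WithTop ℕ∞)) (by decide)).comp_contDiffOn
    K.hpt').clm_apply contDiffOn_const

lemma hιdot' : ContDiffOn ℝ (⊤:ℕ∞) K.ιdot K.B :=
  ContDiffOn.sum fun j _ => (K.hv_comp j).mul (K.pd_smoothOn K.hι' j)

lemma hPi'' : ContDiffOn ℝ (⊤:ℕ∞) K.Pi' K.B :=
  ((K.hχ.fderiv_right (m := ((⊤:ℕ∞):WithTop ℕ∞)) (by decide)).comp_contDiffOn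
    (K.hι'.prodMk K.hιdot')).clm_apply contDiffOn_const

lemma hdχι' : ContDiffOn ℝ (⊤:ℕ∞) K.dχι K.B :=
  ((K.hχ.fderiv_right (m := ((⊤:ℕ∞):WithTop ℕ∞)) (by decide)).comp_contDiffOn
    (K.hι'.prodMk K.hιdot')).clm_apply contDiffOn_const

lemma hdivρg' : ContDiffOn ℝ (⊤:ℕ∞) K.divρg K.B :=
  ContDiffOn.sum fun j _ => K.pd_smoothOn (K.hρ.mul (K.hdφg' j)) j

lemma hP' : ContDiffOn ℝ (⊤:ℕ∞) (fun y => ∑ j, K.v y j * pd j K.Pi' y) K.B :=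
  ContDiffOn.sum fun j _ => (K.hv_comp j).mul (K.pd_smoothOn K.hPi'' j)

lemma hpcheck' : ContDiffOn ℝ (⊤:ℕ∞) K.pcheck K.B :=
  ((K.hρ.mul K.hι').mul K.hP').sub K.hdχι'

lemma hpbar' : ContDiffOn ℝ (⊤:ℕ∞) K.pbar K.B :=
  (((K.hρ.mul K.hι').mul K.hdφι').neg.add (K.hι'.mul K.hdivρg')).sub K.hpcheck'

lemma hC' : ContDiffOn ℝ (⊤:ℕ∞) (fun y => ∑ j, K.dφg y j * pd j K.ι y) K.B :=
  ContDiffOn.sum fun j _ => (K.hdφg' j).mul (K.pd_smoothOn K.hι' j)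

lemma hξ' : ContDiffOn ℝ (⊤:ℕ∞) K.ξ K.B :=
  ((K.hφ.comp_contDiffOn K.hpt').sub (K.hι'.mul K.hdφι')).sub K.hC'

lemma hTE' (i j : Fin 3) : ContDiffOn ℝ (⊤:ℕ∞) (fun y => K.TE y i j) K.B :=
  (K.pd_smoothOn K.hι' i).mul (K.hρ.mul (K.hdφg' j))

end KortewegFluid

/-- Corollary 2, substructural generation of vorticity:
for a steady flow of a Korteweg fluid satisfying the steady momentum balance,
if the entropy `η` and the total enthalpy `h` are constant throughout `B`,
then at every point of `B` (componentwise):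
`ω × v = −grad(ι² div(ρ ∂_gφ) + ∂_gφ·grad ι) + ι grad(v·grad Π − ∂_ιχ)`. -/
theorem korteweg_substructural_generation_of_vorticity (K : KortewegFluid)
    (hbal : K.MomentumBalance)
    (hη : ∀ x ∈ K.B, ∀ y ∈ K.B, K.η x = K.η y)
    (hh : ∀ x ∈ K.B, ∀ y ∈ K.B, K.htot x = K.htot y) :
    ∀ x ∈ K.B, ∀ i : Fin 3,
      cross (curl K.v x) (K.v x) i
        = -pd i (fun y => (K.ι y) ^ 2 * K.divρg y + ∑ j, K.dφg y j * pd j K.ι y) x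
          + K.ι x * pd i (fun y => (∑ j, K.v y j * pd j K.Pi' y) - K.dχι y) x := by
  intro x hx i
  have hmem : K.B ∈ nhds x := K.hB.mem_nhds hx
  have dAt : ∀ {f : V3 → ℝ}, ContDiffOn ℝ (⊤:ℕ∞) f K.B → DifferentiableAt ℝ f x :=
    fun h => (h.contDiffAt hmem).differentiableAt (by decide)
  have hιρ : K.ι x * K.ρ x = 1 := inv_mul_cancel₀ (K.hρpos x hx).ne'
  have dv : ∀ k : Fin 3, DifferentiableAt ℝ (fun y => K.v y k) x := fun k => dAt (K.hv_comp k)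
  have dpdι : ∀ j : Fin 3, DifferentiableAt ℝ (pd j K.ι) x :=
    fun j => dAt (K.pd_smoothOn K.hι' j)
  have dρg : ∀ j : Fin 3, DifferentiableAt ℝ (fun y => K.ρ y * K.dφg y j) x :=
    fun j => dAt (K.hρ.mul (K.hdφg' j))
  -- Step 1: algebraic identity for the cross product of curl and velocity
  have hcross : cross (curl K.v x) (K.v x) i
      = (∑ j, pd j (fun y => K.v y i) x * K.v x j)
        - (∑ j, K.v x j * pd i (fun y => K.v y j) x) := by
    fin_cases i <;>
      simp [cross, curl, Fin.sum_univ_three] <;> ring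
  -- Step 2: momentum balance solved for the convective term
  have hA : (∑ j, pd j (fun y => K.v y i) x * K.v x j)
      = K.ι x * (∑ j, pd j
          (fun y => -(K.pbar y) * (if i = j then (1:ℝ) else 0) - K.TE y i j) x) := by
    rw [← hbal x hx i, ← mul_assoc, hιρ, one_mul]
  -- Step 3: split the momentum flux divergence
  have hsplit : ∀ j : Fin 3,
      pd j (fun y => -(K.pbar y) * (if i = j then (1:ℝ) else 0) - K.TE y i j) x
        = (-(if i = j then (1:ℝ) else 0)) * pd j K.pbar x
          - pd j (fun y => K.TE y i j) x := by
    intro j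
    have e : (fun y => -(K.pbar y) * (if i = j then (1:ℝ) else 0) - K.TE y i j)
        = fun y => (-(if i = j then (1:ℝ) else 0)) * K.pbar y - K.TE y i j := by
      funext y; ring
    rw [e, pd_sub ((dAt K.hpbar').const_mul _) (dAt (K.hTE' i j)),
      pd_const_mul (dAt K.hpbar')]
  have hMi : (∑ j, pd j
        (fun y => -(K.pbar y) * (if i = j then (1:ℝ) else 0) - K.TE y i j) x)
      = -pd i K.pbar x - (∑ j, pd j (fun y => K.TE y i j) x) := by
    rw [Finset.sum_congr rfl fun j _ => hsplit j, Finset.sum_sub_distrib]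
    congr 1
    simp [neg_mul, ite_mul]
  -- Step 4: divergence of the Korteweg stress row
  have hTEpd : ∀ j : Fin 3, pd j (fun y => K.TE y i j) x
      = pd i K.ι x * pd j (fun y => K.ρ y * K.dφg y j) x
        + (K.ρ x * K.dφg x j) * pd i (pd j K.ι) x := by
    intro j
    have h2 : pd j (fun y => pd i K.ι y * (K.ρ y * K.dφg y j)) x
        = pd i K.ι x * pd j (fun y => K.ρ y * K.dφg y j) x
          + (K.ρ x * K.dφg x j) * pd j (pd i K.ι) x := pd_mul (dpdι i) (dρg j)
    calc pd j (fun y => K.TE y i j) x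
        = pd j (fun y => pd i K.ι y * (K.ρ y * K.dφg y j)) x := rfl
      _ = _ := by rw [h2, pd_comm K.hB hx K.hι' j i]
  have hTEsum : (∑ j, pd j (fun y => K.TE y i j) x)
      = pd i K.ι x * K.divρg x
        + K.ρ x * (∑ j, K.dφg x j * pd i (pd j K.ι) x) := by
    rw [Finset.sum_congr rfl fun j _ => hTEpd j, Finset.sum_add_distrib,
      ← Finset.mul_sum]
    congr 1
    rw [Finset.mul_sum]
    exact Finset.sum_congr rfl fun j _ => by ring
  -- Step 5: derivative of the pressure using ρι = 1 near x
  have hρι : ∀ y ∈ K.B, K.ρ y * K.ι y = 1 :=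
    fun y hy => mul_inv_cancel₀ (K.hρpos y hy).ne'
  have hpbar_eq : pd i K.pbar x
      = -pd i K.dφι x
        + (K.ι x * pd i K.divρg x + K.divρg x * pd i K.ι x)
        - (pd i (fun y => ∑ j, K.v y j * pd j K.Pi' y) x - pd i K.dχι x) := by
    have e : K.pbar =ᶠ[nhds x] fun y =>
        -K.dφι y + K.ι y * K.divρg y
          - ((∑ j, K.v y j * pd j K.Pi' y) - K.dχι y) := by
      filter_upwards [hmem] with y hy
      simp [KortewegFluid.pbar, KortewegFluid.pcheck, hρι y hy]
    rw [pd_congr e,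
      pd_sub (((dAt K.hdφι').fun_neg).fun_add ((dAt K.hι').fun_mul (dAt K.hdivρg')))
        ((dAt K.hP').fun_sub (dAt K.hdχι')),
      pd_add (dAt K.hdφι').fun_neg ((dAt K.hι').fun_mul (dAt K.hdivρg')), pd_neg,
      pd_mul (dAt K.hι') (dAt K.hdivρg'),
      pd_sub (dAt K.hP') (dAt K.hdχι')]
  -- Step 6: constancy of entropy and total enthalpy
  have hη0 : pd i K.η x = 0 := by
    have e : K.η =ᶠ[nhds x] fun _ => K.η x := by
      filter_upwards [hmem] with y hy; exact hη y hy x hx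
    rw [pd_congr e, pd_const]
  have hh0 : pd i K.htot x = 0 := by
    have e : K.htot =ᶠ[nhds x] fun _ => K.htot x := by
      filter_upwards [hmem] with y hy; exact hh y hy x hx
    rw [pd_congr e, pd_const]
  have hsq : ∀ k : Fin 3, pd i (fun y => (K.v y k)^2) x
      = 2 * (K.v x k * pd i (fun y => K.v y k) x) := by
    intro k
    rw [show (fun y => (K.v y k)^2) = fun y => K.v y k * K.v y k from
      funext fun y => pow_two (K.v y k), pd_mul (dv k) (dv k)]
    ring
  have hsumv : DifferentiableAt ℝ (fun y => ∑ k, (K.v y k)^2) x :=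
    dAt (ContDiffOn.sum fun k _ => (K.hv_comp k).pow 2)
  have hBv : (∑ j, K.v x j * pd i (fun y => K.v y j) x) = -pd i K.ξ x := by
    have e : K.htot = fun y => (1/2) * (∑ k, (K.v y k)^2) + K.ξ y := rfl
    rw [e] at hh0
    rw [pd_add (hsumv.const_mul _) (dAt K.hξ'), pd_const_mul hsumv,
      pd_sum _ (fun k _ => (dv k).fun_pow 2)] at hh0
    simp only [hsq] at hh0
    rw [Fin.sum_univ_three] at hh0
    rw [Fin.sum_univ_three]
    linarith
  -- Step 7: derivative of the specific enthalpy via the chain rule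
  have dφpt : DifferentiableAt ℝ (fun y => K.φ (K.pt y)) x :=
    dAt (K.hφ.comp_contDiffOn K.hpt')
  have dC : DifferentiableAt ℝ (fun y => ∑ j, K.dφg y j * pd j K.ι y) x := dAt K.hC'
  have hchain : pd i (fun y => K.φ (K.pt y)) x
      = K.dφι x * pd i K.ι x
        + (∑ j, K.dφg x j * pd i (pd j K.ι) x)
        + K.temp x * pd i K.η x := by
    exact pd_comp3 (K.hφ.differentiable (by decide)) (dAt K.hι')
      (fun j => dpdι j) (dAt K.hη)
  have hξpd : pd i K.ξ x
      = (K.dφι x * pd i K.ι x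
          + (∑ j, K.dφg x j * pd i (pd j K.ι) x)
          + K.temp x * pd i K.η x)
        - (K.ι x * pd i K.dφι x + K.dφι x * pd i K.ι x)
        - pd i (fun y => ∑ j, K.dφg y j * pd j K.ι y) x := by
    have e : K.ξ = fun y =>
        K.φ (K.pt y) - K.ι y * K.dφι y - (∑ j, K.dφg y j * pd j K.ι y) := rfl
    rw [e, pd_sub (dφpt.fun_sub ((dAt K.hι').fun_mul (dAt K.hdφι'))) dC,
      pd_sub dφpt ((dAt K.hι').fun_mul (dAt K.hdφι')),
      pd_mul (dAt K.hι') (dAt K.hdφι'), hchain]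
  -- Step 8: the two gradients on the right-hand side
  have hR1 : pd i (fun y => (K.ι y) ^ 2 * K.divρg y + ∑ j, K.dφg y j * pd j K.ι y) x
      = ((K.ι x * K.ι x) * pd i K.divρg x
          + K.divρg x * (K.ι x * pd i K.ι x + K.ι x * pd i K.ι x))
        + pd i (fun y => ∑ j, K.dφg y j * pd j K.ι y) x := by
    rw [show (fun y => (K.ι y) ^ 2 * K.divρg y + ∑ j, K.dφg y j * pd j K.ι y)
        = fun y => (K.ι y * K.ι y) * K.divρg y + ∑ j, K.dφg y j * pd j K.ι y from
      funext fun y => by rw [pow_two]]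
    rw [pd_add (((dAt K.hι').fun_mul (dAt K.hι')).fun_mul (dAt K.hdivρg')) dC,
      pd_mul ((dAt K.hι').fun_mul (dAt K.hι')) (dAt K.hdivρg'),
      pd_mul (dAt K.hι') (dAt K.hι')]
  have hR2 : pd i (fun y => (∑ j, K.v y j * pd j K.Pi' y) - K.dχι y) x
      = pd i (fun y => ∑ j, K.v y j * pd j K.Pi' y) x - pd i K.dχι x :=
    pd_sub (dAt K.hP') (dAt K.hdχι')
  -- Final assembly
  rw [hcross, hA, hMi, hTEsum, hpbar_eq, hBv, hξpd, hη0, hR1, hR2]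
  linear_combination (-(∑ j, K.dφg x j * pd i (pd j K.ι) x)) * hιρ
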